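/- Let M be a matroid on a finite ground set U with two weight functions v, w : U → ℝ such that the mapping is monotonic, i.e., for all i, j ∈ U, v(i) ≥ v(j) implies w(i) ≥ w(j). Then every basis of M that has maximum total weight with respect to v also has maximum total weight with respect to w. -/

import Mathlib

/-- If one multiset of reals dominates another in counts above every threshold and has the
same cardinality, its sum is at least as large. -/
lemma aux_multiset_sum_le (n : ℕ) : ∀ (m m' : Multiset ℝ), m.card = n → m'.card = n →
    (∀ t : ℝ, (m'.filter (t ≤ ·)).card ≤ (m.filter (t ≤ ·)).card) → m'.sum ≤ m.sum := by
  induction n with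
  | zero =>
    intro m m' hm hm' _
    rw [Multiset.card_eq_zero] at hm hm'
    simp [hm, hm']
  | succ n ih =>
    intro m m' hm hm' hcnt
    have hm'ne : m' ≠ 0 := by
      intro h; rw [h] at hm'; simp at hm'
    have hne : m'.toFinset.Nonempty := by
      rw [Finset.nonempty_iff_ne_empty]
      simpa [Multiset.toFinset_eq_empty] using hm'ne
    set a := m'.toFinset.max' hne with ha
    have ham' : a ∈ m' := by
      have := m'.toFinset.max'_mem hne
      rwa [Multiset.mem_toFinset] at this
    have hmax' : ∀ b ∈ m', b ≤ a := by
      intro b hb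
      exact m'.toFinset.le_max' b (Multiset.mem_toFinset.mpr hb)
    -- find b ∈ m with a ≤ b
    have h1 : 0 < (m'.filter (a ≤ ·)).card :=
      Multiset.card_pos.mpr (by
        intro h
        have : a ∈ m'.filter (a ≤ ·) := Multiset.mem_filter.mpr ⟨ham', le_refl a⟩
        rw [h] at this; simp at this)
    have h2 : 0 < (m.filter (a ≤ ·)).card := lt_of_lt_of_le h1 (hcnt a)
    obtain ⟨b, hbmem⟩ := Multiset.card_pos_iff_exists_mem.mp h2
    have hbm : b ∈ m := (Multiset.mem_filter.mp hbmem).1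
    have hab : a ≤ b := (Multiset.mem_filter.mp hbmem).2
    have hcnt' : ∀ t : ℝ, ((m'.erase a).filter (t ≤ ·)).card ≤
        ((m.erase b).filter (t ≤ ·)).card := by
      intro t
      by_cases hta : t ≤ a
      · have htb : t ≤ b := le_trans hta hab
        have e1 : (m'.filter (t ≤ ·)).card = ((m'.erase a).filter (t ≤ ·)).card + 1 := by
          conv_lhs => rw [← Multiset.cons_erase ham']
          rw [Multiset.filter_cons_of_pos _ hta, Multiset.card_cons]
        have e2 : (m.filter (t ≤ ·)).card = ((m.erase b).filter (t ≤ ·)).card + 1 := by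
          conv_lhs => rw [← Multiset.cons_erase hbm]
          rw [Multiset.filter_cons_of_pos _ htb, Multiset.card_cons]
        have := hcnt t
        omega
      · have : (m'.erase a).filter (t ≤ ·) = 0 := by
          rw [Multiset.filter_eq_nil]
          intro c hc hle
          exact hta (le_trans hle (hmax' c (Multiset.mem_of_mem_erase hc)))
        simp [this]
    have hsums : (m'.erase a).sum ≤ (m.erase b).sum := by
      apply ih
      · rw [Multiset.card_erase_of_mem hbm, hm]; rfl
      · rw [Multiset.card_erase_of_mem ham', hm']; rfl
      · exact hcnt'
    calc m'.sum = a + (m'.erase a).sum := by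
          rw [← Multiset.sum_cons, Multiset.cons_erase ham']
      _ ≤ b + (m.erase b).sum := add_le_add hab hsums
      _ = m.sum := by rw [← Multiset.sum_cons, Multiset.cons_erase hbm]

/-- If the mapping from weights `v` to weights `w` is monotonic, then any basis of a
matroid on a finite ground set of maximum weight w.r.t. `v` also has maximum
weight w.r.t. `w`. -/
theorem stmt_1 {α : Type*} [Fintype α] (M : Matroid α) (hE : M.E = Set.univ)
    (v w : α → ℝ) (hmono : ∀ i j : α, v i ≥ v j → w i ≥ w j)
    (B : Finset α) (hB : M.IsBase ↑B)
    (hmax : ∀ B' : Finset α, M.IsBase ↑B' → ∑ a ∈ B', v a ≤ ∑ a ∈ B, v a) :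
    ∀ B' : Finset α, M.IsBase ↑B' → ∑ a ∈ B', w a ≤ ∑ a ∈ B, w a := by
  classical
  intro B' hB'
  -- counting lemma: at every threshold, B has at least as many heavy elements as B'
  have hcount : ∀ t : ℝ, (B'.filter (fun i => t ≤ w i)).card ≤
      (B.filter (fun i => t ≤ w i)).card := by
    intro t
    by_contra hlt
    push_neg at hlt
    set I : Finset α := B.filter (fun i => t ≤ w i) with hI
    set J : Finset α := B'.filter (fun i => t ≤ w i) with hJ
    have hIindep : M.Indep ↑I := hB.indep.subset (by
      exact_mod_cast Finset.coe_subset.mpr (Finset.filter_subset _ _))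
    have hJindep : M.Indep ↑J := hB'.indep.subset (by
      exact_mod_cast Finset.coe_subset.mpr (Finset.filter_subset _ _))
    have hlt' : (↑I : Set α).encard < (↑J : Set α).encard := by
      rw [Set.encard_coe_eq_coe_finsetCard, Set.encard_coe_eq_coe_finsetCard]
      exact_mod_cast hlt
    obtain ⟨x, hxmem, hxind⟩ := hIindep.augment hJindep hlt'
    obtain ⟨B₂, hB₂, hsub1, hsub2⟩ := hxind.exists_isBase_subset_union_isBase hB
    have hIB : (↑I : Set α) ⊆ ↑B := by
      exact_mod_cast Finset.coe_subset.mpr (Finset.filter_subset _ _)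
    have hxJ : x ∈ J := hxmem.1
    have hxw : t ≤ w x := (Finset.mem_filter.mp hxJ).2
    have hxB : x ∉ (↑B : Set α) := by
      intro hxB
      exact hxmem.2 (Finset.mem_filter.mpr ⟨hxB, hxw⟩)
    have hsub2' : B₂ ⊆ insert x ↑B := by
      refine hsub2.trans ?_
      rw [Set.insert_union]
      exact Set.insert_subset_insert (Set.union_subset hIB subset_rfl)
    have hxB₂ : x ∈ B₂ := hsub1 (Set.mem_insert _ _)
    have hdiff : B₂ \ (↑B : Set α) = {x} := by
      apply Set.Subset.antisymm
      · rintro b ⟨hb1, hb2⟩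
        rcases hsub2' hb1 with h | h
        · exact h
        · exact absurd h hb2
      · rintro b rfl
        exact ⟨hxB₂, hxB⟩
    have hdiff2 : ((↑B : Set α) \ B₂).encard = 1 := by
      rw [hB.encard_sdiff_comm hB₂, hdiff, Set.encard_singleton]
    obtain ⟨y, hy⟩ := Set.encard_eq_one.mp hdiff2
    have hyB : y ∈ B := by
      have : y ∈ (↑B : Set α) \ B₂ := hy ▸ rfl
      exact_mod_cast this.1
    have hyB₂ : y ∉ B₂ := by
      have : y ∈ (↑B : Set α) \ B₂ := hy ▸ rfl
      exact this.2
    have hyI : y ∉ I := by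
      intro hyI
      exact hyB₂ (hsub1 (Set.mem_insert_of_mem _ hyI))
    have hyw : ¬ t ≤ w y := by
      intro h
      exact hyI (Finset.mem_filter.mpr ⟨hyB, h⟩)
    have hvyx : v y < v x := by
      by_contra h
      push_neg at h
      exact hyw (le_trans hxw (hmono y x h))
    -- B₂ is the finset insert x (B.erase y)
    have hxne : x ∉ B.erase y := fun h => hxB (by exact_mod_cast Finset.erase_subset _ _ h)
    have hB₂eq : B₂ = ↑(insert x (B.erase y)) := by
      apply Set.Subset.antisymm
      · intro b hb
        rcases hsub2' hb with h | h
        · subst h; simp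
        · have hbB : b ∈ B := by exact_mod_cast h
          have hbny : b ≠ y := fun hbe => hyB₂ (hbe ▸ hb)
          simp [hbB, hbny]
      · intro b hb
        simp only [Finset.coe_insert, Set.mem_insert_iff, Finset.coe_erase,
          Set.mem_diff, Set.mem_singleton_iff] at hb
        rcases hb with rfl | ⟨hbB, hbny⟩
        · exact hxB₂
        · by_contra hbB₂
          have : b ∈ ((↑B : Set α) \ B₂) := ⟨hbB, hbB₂⟩
          rw [hy] at this
          exact hbny this
    have hFbase : M.IsBase ↑(insert x (B.erase y)) := hB₂eq ▸ hB₂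
    have hle := hmax _ hFbase
    rw [Finset.sum_insert hxne] at hle
    have herase : ∑ a ∈ B.erase y, v a = ∑ a ∈ B, v a - v y := by
      have := Finset.sum_erase_add B v hyB
      linarith
    rw [herase] at hle
    linarith
  -- same cardinality of bases
  have hcard : B.card = B'.card := by
    have := hB.encard_eq_encard_of_isBase hB'
    rw [Set.encard_coe_eq_coe_finsetCard, Set.encard_coe_eq_coe_finsetCard] at this
    exact_mod_cast this
  -- transfer to multisets and conclude
  have key := aux_multiset_sum_le B.card (B.val.map w) (B'.val.map w)
    (by rw [Multiset.card_map]; rfl) (by rw [Multiset.card_map, hcard]; rfl)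
    (by
      intro t
      have e : ∀ (s : Finset α), ((s.val.map w).filter (t ≤ ·)).card =
          (s.filter (fun i => t ≤ w i)).card := by
        intro s
        rw [Multiset.filter_map, Multiset.card_map]
        rfl
      rw [e B, e B']
      exact hcount t)
  exact key
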